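/- The discrete Hilbert transform ℍ on ℓ²(ℤ) is an isometry: ‖ℍu‖ = ‖u‖ for all u ∈ ℓ²(ℤ). -/

import Mathlib

open Real Filter Topology


noncomputable def cker (m : ℤ) : ℝ := if Odd m then 2 / (m : ℝ) else 0

lemma cker_neg (m : ℤ) : cker (-m) = - cker m := by
  unfold cker
  by_cases h : Odd m
  · simp [h, odd_neg.mpr h]
    rw [div_neg]
  · simp [h, fun hh => h (odd_neg.mp hh)]

lemma cker_sq_neg (m : ℤ) : (cker (-m))^2 = (cker m)^2 := by
  rw [cker_neg]; ring

lemma cker_sq_le (m : ℤ) : (cker m)^2 ≤ 4 * (1 / (m : ℝ)^2) := by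
  unfold cker
  by_cases h : Odd m
  · simp [h]
    rw [div_pow, div_eq_mul_inv]
    norm_num
  · simp [h]; positivity

lemma summable_cker_sq : Summable (fun m : ℤ => (cker m)^2) := by
  have h4 : Summable (fun m : ℤ => 4 * (1 / (m : ℝ)^2)) :=
    (summable_one_div_int_pow.mpr one_lt_two).mul_left 4
  exact h4.of_nonneg_of_le (fun m => sq_nonneg _) cker_sq_le

lemma hasSum_odd_one_div_sq :
    HasSum (fun n : ℕ => if Odd n then (1 : ℝ) / (n : ℝ)^2 else 0) (π^2 / 8) := by
  have hz : HasSum (fun n : ℕ => (1 : ℝ) / (n : ℝ)^2) (π ^ 2 / 6) := hasSum_zeta_two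
  have hev : HasSum (fun n : ℕ => if Odd n then (0:ℝ) else 1 / (n : ℝ)^2) (π ^ 2 / 24) := by
    have hinj : Function.Injective (fun n : ℕ => 2 * n) := fun a b h => by
      simp only at h; omega
    refine (Function.Injective.hasSum_iff (f := fun n : ℕ => if Odd n then (0:ℝ) else 1 / (n : ℝ)^2)
      hinj ?_).mp ?_
    · intro x hx
      have : Odd x := by
        rcases Nat.even_or_odd x with he | ho
        · exfalso
          obtain ⟨k, hk⟩ := he
          exact hx ⟨k, by simp only; omega⟩
        · exact ho
      simp [this]
    · have : ((fun n : ℕ => if Odd n then (0:ℝ) else 1 / (n : ℝ)^2) ∘ fun n : ℕ => 2 * n)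
          = fun n : ℕ => (1/4) * (1 / (n : ℝ)^2) := by
        funext n
        simp only [Function.comp]
        have : ¬ Odd (2 * n) := by simp [Nat.not_odd_iff_even, Nat.even_mul]
        simp only [this, if_false]
        push_cast
        rw [mul_pow]
        ring
      rw [this]
      convert hz.mul_left (1/4) using 1
      · rfl
      ring

  have := hz.sub hev
  convert this using 1
  · rfl
  · funext n
    by_cases h : Odd n <;> simp [h]
  · ring

lemma hasSum_cker_sq_nat : HasSum (fun n : ℕ => (cker (n : ℤ))^2) (π^2 / 2) := by
  have := hasSum_odd_one_div_sq.mul_left 4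
  have h2 : (4 : ℝ) * (π^2/8) = π^2/2 := by ring
  rw [h2] at this
  convert this using 1
  rfl
  funext n
  unfold cker
  by_cases h : Odd n
  · have : Odd (n : ℤ) := (Int.odd_coe_nat n).mpr h
    simp [h, this]
    rw [div_pow, div_eq_mul_inv]
    norm_num
  · have : ¬ Odd (n : ℤ) := fun hh => h ((Int.odd_coe_nat n).mp hh)
    simp [h, this]

set_option maxHeartbeats 1000000 in
lemma hasSum_cker_sq : HasSum (fun m : ℤ => (cker m)^2) (π^2) := by
  have hpos := hasSum_cker_sq_nat
  have hneg : HasSum (fun n : ℕ => (cker (-(n+1) : ℤ))^2) (π^2/2) := by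
    have h1 : HasSum (fun n : ℕ => (cker ((n + 1 : ℕ) : ℤ))^2) (π^2/2) := by
      have h0 := (hasSum_nat_add_iff' (f := fun n : ℕ => (cker (n : ℤ))^2) 1).mpr
        hasSum_cker_sq_nat
      have hz : (∑ i ∈ Finset.range 1, (cker (i : ℤ))^2) = 0 := by
        simp [cker]
      rw [hz, sub_zero] at h0
      exact h0
    have hfe : (fun n : ℕ => (cker (-(n+1) : ℤ))^2)
        = fun n : ℕ => (cker ((n + 1 : ℕ) : ℤ))^2 := by
      funext n
      rw [show (-(n+1) : ℤ) = -((n + 1 : ℕ) : ℤ) by push_cast; ring, cker_sq_neg]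
    rw [hfe]
    exact h1
  have h := HasSum.of_nat_of_neg_add_one (f := fun m : ℤ => (cker m)^2) hpos hneg
  convert h using 1
  ring

lemma abs_mul_le_half (a b : ℝ) : |a * b| ≤ (a^2 + b^2)/2 := by
  rw [abs_mul]
  nlinarith [sq_abs a, sq_abs b, sq_nonneg (|a| - |b|), abs_nonneg a, abs_nonneg b]

lemma summable_cker_sq_shift (n : ℤ) : Summable (fun m : ℤ => (cker (m + n))^2) := by
  have h := summable_cker_sq.comp_injective (i := fun m : ℤ => m + n) (add_left_injective n)
  exact h

lemma summable_cker_mul (n : ℤ) : Summable (fun m : ℤ => cker m * cker (m + n)) := by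
  apply Summable.of_abs
  apply Summable.of_nonneg_of_le (fun m => abs_nonneg _)
    (fun m => abs_mul_le_half (cker m) (cker (m + n)))
  exact (summable_cker_sq.add (summable_cker_sq_shift n)).div_const 2

lemma tendsto_Icc_atTop : Tendsto (fun M : ℕ => Finset.Icc (-(M:ℤ)) M) atTop atTop := by
  apply Filter.tendsto_atTop_finset_of_monotone
  · intro a b hab
    apply Finset.Icc_subset_Icc
    · exact neg_le_neg (by exact_mod_cast hab)
    · exact_mod_cast hab
  · intro x
    exact ⟨x.natAbs, by simp only [Finset.mem_Icc]; omega⟩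

lemma tendsto_sum_Icc {f : ℤ → ℝ} {a : ℝ} (hf : HasSum f a) :
    Tendsto (fun M : ℕ => ∑ m ∈ Finset.Icc (-(M:ℤ)) M, f m) atTop (𝓝 a) := by
  have h : Tendsto (fun s : Finset ℤ => ∑ m ∈ s, f m) atTop (𝓝 a) := hf
  exact h.comp tendsto_Icc_atTop

lemma sum_Icc_odd_fun (g : ℤ → ℝ) (hg : ∀ m, g (-m) = - g m) (K : ℤ) :
    ∑ m ∈ Finset.Icc (-K) K, g m = 0 := by
  have h : ∑ m ∈ Finset.Icc (-K) K, g m = ∑ m ∈ Finset.Icc (-K) K, g (-m) := by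
    apply Finset.sum_nbij' (i := fun m => -m) (j := fun m => -m)
    · intro a ha; simp only [Finset.mem_Icc] at *; omega
    · intro a ha; simp only [Finset.mem_Icc] at *; omega
    · intro a _; ring
    · intro a _; ring
    · intro a _; rw [neg_neg]
  have h2 : ∑ m ∈ Finset.Icc (-K) K, g (-m) = - ∑ m ∈ Finset.Icc (-K) K, g m := by
    rw [← Finset.sum_neg_distrib]
    exact Finset.sum_congr rfl fun m _ => hg m
  rw [h2] at h
  linarith

lemma odd_add_even {m n : ℤ} (hm : Odd m) (hn : Even n) : Odd (m + n) := by
  obtain ⟨a, ha⟩ := hm; obtain ⟨b, hb⟩ := hn; exact ⟨a + b, by omega⟩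

lemma hasSum_cker_mul_pos {n : ℤ} (hn : 0 < n) :
    HasSum (fun m : ℤ => cker m * cker (m + n)) 0 := by
  by_cases hodd : Odd n
  · have hz : (fun m : ℤ => cker m * cker (m + n)) = fun _ => 0 := by
      funext m
      by_cases hm : Odd m
      · have hmn : ¬ Odd (m + n) := by
          obtain ⟨a, ha⟩ := hm; obtain ⟨b, hb⟩ := hodd
          intro ⟨c, hc⟩; omega
        simp [cker, hmn]
      · simp [cker, hm]
    rw [hz]; exact hasSum_zero
  · have hev : Even n := Int.not_odd_iff_even.mp hodd
    have hn0 : (n : ℝ) ≠ 0 := Int.cast_ne_zero.mpr (by omega)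
    set f := fun m : ℤ => cker m * cker (m + n) with hf
    obtain ⟨S, hS⟩ := summable_cker_mul n
    suffices hS0 : S = 0 by rwa [hS0] at hS
    have hT := tendsto_sum_Icc hS
    set g := fun m : ℤ => (2 / (n:ℝ)) * cker m with hgdef
    have hgodd : ∀ m, g (-m) = - g m := by
      intro m; simp only [hgdef, cker_neg]; ring
    have hfg : ∀ m : ℤ, f m = g m - g (m + n) := by
      intro m
      by_cases hm : Odd m
      · have hmn : Odd (m + n) := odd_add_even hm hev
        have hm0 : (m : ℝ) ≠ 0 := Int.cast_ne_zero.mpr (by rintro rfl; exact (by simpa using hm))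
        have hmn0 : ((m:ℝ) + (n:ℝ)) ≠ 0 := by
          have : m + n ≠ 0 := by rintro h; exact (by simpa [h] using hmn)
          push_cast [← Int.cast_add]
          exact_mod_cast Int.cast_ne_zero.mpr this
        simp only [hf, hgdef, cker, hm, hmn, if_true]
        push_cast
        field_simp
        ring
      · have hmn : ¬ Odd (m + n) := by
          intro h
          obtain ⟨b, hb⟩ := hev
          obtain ⟨c, hc⟩ := h
          exact hm ⟨c - b, by omega⟩
        simp [hf, hgdef, cker, hm, hmn]
    have key : ∀ M : ℕ, n ≤ (M:ℤ) → ∑ m ∈ Finset.Icc (-(M:ℤ)) M, f m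
        = - ∑ m ∈ Finset.Ioc ((M:ℤ) - n) ((M:ℤ) + n), g m := by
      intro M hM
      have h1 : ∑ m ∈ Finset.Icc (-(M:ℤ)) M, f m
          = (∑ m ∈ Finset.Icc (-(M:ℤ)) M, g m)
            - ∑ m ∈ Finset.Icc (-(M:ℤ)) M, g (m + n) := by
        rw [← Finset.sum_sub_distrib]
        exact Finset.sum_congr rfl fun m _ => hfg m
      have h2 : ∑ m ∈ Finset.Icc (-(M:ℤ)) M, g (m + n)
          = ∑ m ∈ Finset.Icc (-(M:ℤ) + n) ((M:ℤ) + n), g m := by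
        rw [← Finset.map_add_right_Icc, Finset.sum_map]
        rfl
      have h3 : ∑ m ∈ Finset.Icc (-(M:ℤ)) M, g m = 0 := sum_Icc_odd_fun g hgodd M
      have h4 : Finset.Icc (-(M:ℤ) + n) ((M:ℤ) + n)
          = Finset.Icc (-((M:ℤ) - n)) ((M:ℤ) - n) ∪ Finset.Ioc ((M:ℤ) - n) ((M:ℤ) + n) := by
        ext x
        simp only [Finset.mem_Icc, Finset.mem_union, Finset.mem_Ioc]
        omega
      have h5 : Disjoint (Finset.Icc (-((M:ℤ) - n)) ((M:ℤ) - n))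
          (Finset.Ioc ((M:ℤ) - n) ((M:ℤ) + n)) := by
        rw [Finset.disjoint_left]
        intro x hx hx'
        simp only [Finset.mem_Icc] at hx
        simp only [Finset.mem_Ioc] at hx'
        omega
      rw [h1, h2, h3, h4, Finset.sum_union h5, sum_Icc_odd_fun g hgodd]
      ring
    have hbound : ∀ M : ℕ, n ≤ (M:ℤ) →
        |∑ m ∈ Finset.Icc (-(M:ℤ)) M, f m| ≤ (2*(n:ℝ)) * ((2/(n:ℝ)) * (2/((M:ℝ)-(n:ℝ)+1))) := by
      intro M hM
      rw [key M hM, abs_neg]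
      calc |∑ m ∈ Finset.Ioc ((M:ℤ) - n) ((M:ℤ) + n), g m|
          ≤ ∑ m ∈ Finset.Ioc ((M:ℤ) - n) ((M:ℤ) + n), |g m| := Finset.abs_sum_le_sum_abs _ _
        _ ≤ (Finset.Ioc ((M:ℤ) - n) ((M:ℤ) + n)).card • ((2/(n:ℝ)) * (2/((M:ℝ)-(n:ℝ)+1))) := by
            apply Finset.sum_le_card_nsmul
            intro x hx
            simp only [Finset.mem_Ioc] at hx
            have hx1 : ((M:ℤ) - n + 1 : ℤ) ≤ x := by omega
            have hxR : ((M:ℝ) - (n:ℝ) + 1) ≤ (x:ℝ) := by exact_mod_cast hx1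
            have hxpos : (0:ℝ) < (M:ℝ) - (n:ℝ) + 1 := by
              have : (0:ℤ) < (M:ℤ) - n + 1 := by omega
              exact_mod_cast this
            have hx0 : (0:ℝ) < (x:ℝ) := lt_of_lt_of_le hxpos hxR
            have habs : |cker x| ≤ 2 / (x:ℝ) := by
              unfold cker
              by_cases hox : Odd x
              · simp only [hox, if_true]
                rw [abs_of_nonneg (div_nonneg (by norm_num) hx0.le)]
              · simp only [hox, if_false, abs_zero]
                exact div_nonneg (by norm_num) hx0.le
            have h2x : 2 / (x:ℝ) ≤ 2 / ((M:ℝ)-(n:ℝ)+1) := by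
              apply div_le_div_of_nonneg_left (by norm_num) hxpos hxR
            have hnR : (0:ℝ) < (n:ℝ) := by exact_mod_cast hn
            calc |g x| = (2/(n:ℝ)) * |cker x| := by
                  rw [hgdef]; rw [abs_mul, abs_of_nonneg (div_nonneg (by norm_num) hnR.le)]
              _ ≤ (2/(n:ℝ)) * (2/((M:ℝ)-(n:ℝ)+1)) := by
                  apply mul_le_mul_of_nonneg_left (le_trans habs h2x)
                    (div_nonneg (by norm_num) hnR.le)
        _ ≤ (2*(n:ℝ)) * ((2/(n:ℝ)) * (2/((M:ℝ)-(n:ℝ)+1))) := by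
            rw [Int.card_Ioc, nsmul_eq_mul]
            have hxpos : (0:ℝ) < (M:ℝ) - (n:ℝ) + 1 := by
              have : (0:ℤ) < (M:ℤ) - n + 1 := by omega
              exact_mod_cast this
            have hnR : (0:ℝ) < (n:ℝ) := by exact_mod_cast hn
            apply mul_le_mul_of_nonneg_right _ (by positivity)
            have hcongr : ((M:ℤ) + n - ((M:ℤ) - n)).toNat = (2*n).toNat := by congr 1; ring
            rw [hcongr]
            have h2n : (0:ℤ) ≤ 2*n := by omega
            have h := (Int.toNat_of_nonneg h2n).le
            exact_mod_cast h
    have hblim : Tendsto (fun M : ℕ => (2*(n:ℝ)) * ((2/(n:ℝ)) * (2/((M:ℝ)-(n:ℝ)+1))))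
        atTop (𝓝 0) := by
      have hgrow : Tendsto (fun M : ℕ => (M:ℝ)-(n:ℝ)+1) atTop atTop := by
        apply tendsto_atTop_add_const_right
        apply tendsto_atTop_add_const_right
        exact tendsto_natCast_atTop_atTop
      have := Tendsto.div_atTop (tendsto_const_nhds (x := (2:ℝ))) hgrow
      have h2 := (this.const_mul (2/(n:ℝ))).const_mul (2*(n:ℝ))
      simpa using h2
    have hT0 : Tendsto (fun M : ℕ => ∑ m ∈ Finset.Icc (-(M:ℤ)) M, f m) atTop (𝓝 0) := by
      apply squeeze_zero_norm' _ hblim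
      filter_upwards [eventually_atTop.mpr ⟨n.toNat, fun M hM => hM⟩] with M hM
      have hnM : n ≤ (M:ℤ) := by omega
      exact hbound M hnM
    exact tendsto_nhds_unique hT hT0

lemma hasSum_cker_mul {n : ℤ} (hn : n ≠ 0) :
    HasSum (fun m : ℤ => cker m * cker (m + n)) 0 := by
  rcases lt_or_gt_of_ne hn with hneg | hpos
  · have h := hasSum_cker_mul_pos (n := -n) (by omega)
    have h2 := ((Equiv.hasSum_iff (Equiv.addRight n)).mpr h)
    have hfe : ((fun m : ℤ => cker m * cker (m + -n)) ∘ (Equiv.addRight n))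
        = fun m : ℤ => cker m * cker (m + n) := by
      funext m
      simp only [Function.comp_apply, Equiv.coe_addRight]
      rw [show m + n + -n = m by ring]
      exact mul_comm _ _
    rw [hfe] at h2
    exact h2
  · exact hasSum_cker_mul_pos hpos

/-- Discrete Hilbert transform on ℤ. -/
noncomputable def Hdisc (u : ℤ → ℝ) (j : ℤ) : ℝ :=
  (1 / Real.pi) * ∑' k : ℤ, if k = j then 0
    else u k * (1 - (-1 : ℝ) ^ (j - k)) / ((j : ℝ) - (k : ℝ))

lemma summand_eq (v : ℤ → ℝ) (j k : ℤ) :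
    (if k = j then (0:ℝ) else v k * (1 - (-1:ℝ)^(j-k)) / ((j:ℝ) - (k:ℝ)))
      = v k * cker (j - k) := by
  by_cases h : k = j
  · subst h; simp [cker]
  · simp only [h, if_false]
    by_cases ho : Odd (j - k)
    · rw [Odd.neg_one_zpow ho]
      unfold cker; rw [if_pos ho]
      have hc : ((j - k : ℤ) : ℝ) = (j:ℝ) - k := by push_cast; ring
      rw [hc]
      ring
    · rw [Even.neg_one_zpow (Int.not_odd_iff_even.mp ho)]
      unfold cker; rw [if_neg ho]
      simp

lemma Hdisc_eq (v : ℤ → ℝ) (j : ℤ) :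
    Hdisc v j = (1/π) * ∑' k : ℤ, v k * cker (j - k) := by
  unfold Hdisc
  congr 1
  exact tsum_congr (summand_eq v j)

lemma summable_cker_sq_sub (j : ℤ) : Summable (fun k : ℤ => (cker (j - k))^2) := by
  have h := summable_cker_sq.comp_injective (i := fun k : ℤ => j - k)
    (fun a b hab => by simp only at hab; omega)
  exact h

lemma summable_sq_shift {v : ℤ → ℝ} (hv : Summable fun k => (v k)^2) (n : ℤ) :
    Summable (fun k : ℤ => (v (k + n))^2) := by
  have h := hv.comp_injective (i := fun k : ℤ => k + n)
    (fun a b hab => by simp only at hab; omega)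
  exact h

lemma summable_mul_of_sq {x y : ℤ → ℝ} (hx : Summable fun k => (x k)^2)
    (hy : Summable fun k => (y k)^2) : Summable (fun k => x k * y k) := by
  apply Summable.of_abs
  apply Summable.of_nonneg_of_le (fun k => abs_nonneg _)
    (fun k => abs_mul_le_half (x k) (y k))
  exact (hx.add hy).div_const 2

lemma summable_mul_cker {v : ℤ → ℝ} (hv : Summable fun k => (v k)^2) (j : ℤ) :
    Summable (fun k => v k * cker (j - k)) :=
  summable_mul_of_sq hv (summable_cker_sq_sub j)

/-- rows are orthonormal (as functions of the second index). -/
lemma hasSum_row_k (a b : ℤ) :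
    HasSum (fun k : ℤ => cker (a - k) * cker (b - k)) (if a = b then π^2 else 0) := by
  by_cases hab : a = b
  · subst hab
    simp only [if_true]
    apply (Equiv.hasSum_iff (f := fun k : ℤ => cker (a - k) * cker (a - k))
      (Equiv.subLeft a)).mp
    have hfe : ((fun k : ℤ => cker (a - k) * cker (a - k)) ∘ (Equiv.subLeft a))
        = fun m : ℤ => (cker m)^2 := by
      funext m
      simp only [Function.comp_apply, Equiv.subLeft_apply]
      rw [show a - (a - m) = m by ring]
      ring
    rw [hfe]
    exact hasSum_cker_sq
  · simp only [hab, if_false]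
    apply (Equiv.hasSum_iff (f := fun k : ℤ => cker (a - k) * cker (b - k))
      (Equiv.subLeft a)).mp
    have hfe : ((fun k : ℤ => cker (a - k) * cker (b - k)) ∘ (Equiv.subLeft a))
        = fun m : ℤ => cker m * cker (m + (b - a)) := by
      funext m
      simp only [Function.comp_apply, Equiv.subLeft_apply]
      rw [show a - (a - m) = m by ring, show b - (a - m) = m + (b - a) by ring]
    rw [hfe]
    exact hasSum_cker_mul (by omega)

/-- columns: sum over j of cker (j - a) * cker (j - b). -/
lemma hasSum_row_j (a b : ℤ) :
    HasSum (fun j : ℤ => cker (j - a) * cker (j - b)) (if a = b then π^2 else 0) := by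
  have h := hasSum_row_k a b
  have hfe : (fun k : ℤ => cker (a - k) * cker (b - k))
      = fun k : ℤ => cker (k - a) * cker (k - b) := by
    funext k
    rw [show a - k = -(k - a) by ring, show b - k = -(k - b) by ring, cker_neg, cker_neg]
    ring
  rwa [hfe] at h

lemma bessel_finset {v : ℤ → ℝ} (hv : Summable fun k => (v k)^2) (T : Finset ℤ) :
    ∑ j ∈ T, (Hdisc v j)^2 ≤ ∑' k, (v k)^2 := by
  have hpi : (π : ℝ) ≠ 0 := Real.pi_ne_zero
  set t : ℤ → ℝ := fun j => ∑' k, v k * cker (j - k) with ht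
  have hts : ∀ j, HasSum (fun k => v k * cker (j - k)) (t j) :=
    fun j => (summable_mul_cker hv j).hasSum
  set a : ℤ → ℝ := fun j => Hdisc v j with ha
  have hat : ∀ j, a j = (1/π) * t j := fun j => Hdisc_eq v j
  set w : ℤ → ℝ := fun k => ∑ j ∈ T, (a j / π) * cker (j - k) with hw
  -- h2 : cross term
  have h2 : HasSum (fun k => v k * w k) (∑ j ∈ T, (a j)^2) := by
    have hterm : ∀ j ∈ T, HasSum (fun k => (a j / π) * (v k * cker (j - k))) ((a j)^2) := by
      intro j _
      have := (hts j).mul_left (a j / π)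
      have hval : (a j / π) * t j = (a j)^2 := by
        rw [hat j] at *
        field_simp
      rwa [hval] at this
    have h := hasSum_sum hterm
    have hfe : (fun k => ∑ j ∈ T, (a j / π) * (v k * cker (j - k)))
        = fun k => v k * w k := by
      funext k
      rw [hw, Finset.mul_sum]
      exact Finset.sum_congr rfl fun j _ => by ring
    rwa [hfe] at h
  -- h3 : square of w
  have h3 : HasSum (fun k => (w k)^2) (∑ j ∈ T, (a j)^2) := by
    have hterm : ∀ p ∈ T ×ˢ T, HasSum
        (fun k => ((a p.1 / π) * (a p.2 / π)) * (cker (p.1 - k) * cker (p.2 - k)))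
        (((a p.1 / π) * (a p.2 / π)) * (if p.1 = p.2 then π^2 else 0)) :=
      fun p _ => (hasSum_row_k p.1 p.2).mul_left _
    have h := hasSum_sum hterm
    have hfe : (fun k => ∑ p ∈ T ×ˢ T,
        ((a p.1 / π) * (a p.2 / π)) * (cker (p.1 - k) * cker (p.2 - k)))
        = fun k => (w k)^2 := by
      funext k
      rw [hw, sq, Finset.sum_mul_sum, ← Finset.sum_product']
      exact Finset.sum_congr rfl fun p _ => by ring
    have hval : (∑ p ∈ T ×ˢ T, ((a p.1 / π) * (a p.2 / π)) * (if p.1 = p.2 then π^2 else 0))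
        = ∑ j ∈ T, (a j)^2 := by
      rw [Finset.sum_product]
      apply Finset.sum_congr rfl
      intro j hj
      have : ∀ l ∈ T, ((a j / π) * (a l / π)) * (if j = l then π^2 else 0)
          = if j = l then (a j)^2 else 0 := by
        intro l _
        by_cases hjl : j = l
        · subst hjl; simp only [if_true]; field_simp
        · simp [hjl]
      rw [Finset.sum_congr rfl this, Finset.sum_ite_eq T j (fun _ => (a j)^2), if_pos hj]
    rw [hfe, hval] at h
    exact h
  -- expansion
  have hr : HasSum (fun k => (v k - w k)^2)
      ((∑' k, (v k)^2) - ∑ j ∈ T, (a j)^2) := by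
    have h := (hv.hasSum.sub (h2.mul_left 2)).add h3
    have hfe : (fun k => ((v k)^2 - 2 * (v k * w k)) + (w k)^2)
        = fun k => (v k - w k)^2 := by
      funext k; ring
    rw [hfe] at h
    convert h using 1
    · rfl
    ring
  have h0 : (0:ℝ) ≤ (∑' k, (v k)^2) - ∑ j ∈ T, (a j)^2 :=
    hasSum_le (fun k => sq_nonneg _) hasSum_zero hr
  linarith

lemma summable_Hdisc_sq {v : ℤ → ℝ} (hv : Summable fun k => (v k)^2) :
    Summable (fun j => (Hdisc v j)^2) :=
  summable_of_sum_le (fun j => sq_nonneg _) (fun T => bessel_finset hv T)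

lemma tsum_Hdisc_sq_le {v : ℤ → ℝ} (hv : Summable fun k => (v k)^2) :
    ∑' j, (Hdisc v j)^2 ≤ ∑' k, (v k)^2 :=
  (summable_Hdisc_sq hv).tsum_le_of_sum_le (fun T => bessel_finset hv T)

lemma hasSum_Hdisc_sq_of_support {v : ℤ → ℝ} {s : Finset ℤ} (hs : ∀ k ∉ s, v k = 0) :
    HasSum (fun j => (Hdisc v j)^2) (∑ k ∈ s, (v k)^2) := by
  have hpi : (π : ℝ) ≠ 0 := Real.pi_ne_zero
  have hsq : ∀ j, (Hdisc v j)^2 = ∑ p ∈ s ×ˢ s,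
      ((v p.1 * v p.2) / π^2) * (cker (j - p.1) * cker (j - p.2)) := by
    intro j
    have hH : Hdisc v j = (1/π) * ∑ k ∈ s, v k * cker (j - k) := by
      rw [Hdisc_eq]
      congr 1
      exact tsum_eq_sum (fun k hk => by rw [hs k hk]; ring)
    rw [hH, mul_pow, pow_two (∑ k ∈ s, v k * cker (j - k)), Finset.sum_mul_sum,
      ← Finset.sum_product', Finset.mul_sum]
    exact Finset.sum_congr rfl fun p _ => by ring
  have hterm : ∀ p ∈ s ×ˢ s, HasSum
      (fun j => ((v p.1 * v p.2) / π^2) * (cker (j - p.1) * cker (j - p.2)))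
      (((v p.1 * v p.2) / π^2) * (if p.1 = p.2 then π^2 else 0)) :=
    fun p _ => (hasSum_row_j p.1 p.2).mul_left _
  have h := hasSum_sum hterm
  have hfe : (fun j => ∑ p ∈ s ×ˢ s,
      ((v p.1 * v p.2) / π^2) * (cker (j - p.1) * cker (j - p.2)))
      = fun j => (Hdisc v j)^2 := by
    funext j; rw [hsq j]
  have hval : (∑ p ∈ s ×ˢ s, ((v p.1 * v p.2) / π^2) * (if p.1 = p.2 then π^2 else 0))
      = ∑ k ∈ s, (v k)^2 := by
    rw [Finset.sum_product]
    apply Finset.sum_congr rfl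
    intro k hk
    have hc : ∀ l ∈ s, ((v k * v l) / π^2) * (if k = l then π^2 else 0)
        = if k = l then (v k)^2 else 0 := by
      intro l _
      by_cases hkl : k = l
      · subst hkl; simp only [if_true]; field_simp
      · simp [hkl]
    rw [Finset.sum_congr rfl hc, Finset.sum_ite_eq s k (fun _ => (v k)^2), if_pos hk]
  rw [hfe, hval] at h
  exact h

lemma tsum_mul_le_sqrt {x y : ℤ → ℝ} (hx : Summable fun k => (x k)^2)
    (hy : Summable fun k => (y k)^2) :
    ∑' k, x k * y k ≤ Real.sqrt (∑' k, (x k)^2) * Real.sqrt (∑' k, (y k)^2) := by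
  apply (summable_mul_of_sq hx hy).tsum_le_of_sum_le
  intro T
  have h1 := Finset.sum_mul_sq_le_sq_mul_sq T x y
  calc ∑ i ∈ T, x i * y i ≤ |∑ i ∈ T, x i * y i| := le_abs_self _
    _ = Real.sqrt ((∑ i ∈ T, x i * y i)^2) := (Real.sqrt_sq_eq_abs _).symm
    _ ≤ Real.sqrt ((∑ i ∈ T, (x i)^2) * ∑ i ∈ T, (y i)^2) := Real.sqrt_le_sqrt h1
    _ = Real.sqrt (∑ i ∈ T, (x i)^2) * Real.sqrt (∑ i ∈ T, (y i)^2) :=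
        Real.sqrt_mul (Finset.sum_nonneg fun i _ => sq_nonneg _) _
    _ ≤ Real.sqrt (∑' k, (x k)^2) * Real.sqrt (∑' k, (y k)^2) := by
        apply mul_le_mul
        · exact Real.sqrt_le_sqrt (hx.sum_le_tsum T (fun i _ => sq_nonneg _))
        · exact Real.sqrt_le_sqrt (hy.sum_le_tsum T (fun i _ => sq_nonneg _))
        · exact Real.sqrt_nonneg _
        · exact Real.sqrt_nonneg _

lemma summable_add_sq {x y : ℤ → ℝ} (hx : Summable fun k => (x k)^2)
    (hy : Summable fun k => (y k)^2) : Summable (fun k => (x k + y k)^2) := by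
  have h : ∀ k, (x k + y k)^2 = (x k)^2 + 2 * (x k * y k) + (y k)^2 := fun k => by ring
  apply Summable.congr _ (fun k => (h k).symm)
  exact (hx.add ((summable_mul_of_sq hx hy).mul_left 2)).add hy

lemma sqrt_tsum_add_sq_le {x y : ℤ → ℝ} (hx : Summable fun k => (x k)^2)
    (hy : Summable fun k => (y k)^2) :
    Real.sqrt (∑' k, (x k + y k)^2)
      ≤ Real.sqrt (∑' k, (x k)^2) + Real.sqrt (∑' k, (y k)^2) := by
  set X := ∑' k, (x k)^2
  set Y := ∑' k, (y k)^2
  have hX0 : 0 ≤ X := tsum_nonneg fun k => sq_nonneg _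
  have hY0 : 0 ≤ Y := tsum_nonneg fun k => sq_nonneg _
  have hexp : ∑' k, (x k + y k)^2 = X + 2 * (∑' k, x k * y k) + Y := by
    have h := (hx.hasSum.add ((summable_mul_of_sq hx hy).hasSum.mul_left 2)).add hy.hasSum
    have hfe : (fun k => ((x k)^2 + 2 * (x k * y k)) + (y k)^2)
        = fun k => (x k + y k)^2 := by funext k; ring
    rw [hfe] at h
    exact h.tsum_eq
  have hle : ∑' k, (x k + y k)^2 ≤ (Real.sqrt X + Real.sqrt Y)^2 := by
    have hcs := tsum_mul_le_sqrt hx hy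
    have hXs : Real.sqrt X ^ 2 = X := Real.sq_sqrt hX0
    have hYs : Real.sqrt Y ^ 2 = Y := Real.sq_sqrt hY0
    rw [hexp]
    nlinarith [Real.sqrt_nonneg X, Real.sqrt_nonneg Y]
  calc Real.sqrt (∑' k, (x k + y k)^2) ≤ Real.sqrt ((Real.sqrt X + Real.sqrt Y)^2) :=
        Real.sqrt_le_sqrt hle
    _ = Real.sqrt X + Real.sqrt Y := by
        rw [Real.sqrt_sq (by positivity)]

lemma Hdisc_add {v w : ℤ → ℝ} (hv : Summable fun k => (v k)^2)
    (hw : Summable fun k => (w k)^2) (j : ℤ) :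
    Hdisc (fun k => v k + w k) j = Hdisc v j + Hdisc w j := by
  rw [Hdisc_eq, Hdisc_eq, Hdisc_eq, ← mul_add,
    ← (summable_mul_cker hv j).tsum_add (summable_mul_cker hw j)]
  congr 1
  exact tsum_congr fun k => by ring

theorem key_parseval (u : ℤ → ℝ) (hu : Summable (fun j => (u j) ^ 2)) :
    ∑' j : ℤ, (Hdisc u j)^2 = ∑' j : ℤ, (u j)^2 := by
  set B := ∑' j : ℤ, (u j)^2 with hB
  set A := ∑' j : ℤ, (Hdisc u j)^2 with hA
  set uu : ℕ → ℤ → ℝ := fun N k => if k ∈ Finset.Icc (-(N:ℤ)) N then u k else 0 with huu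
  set ww : ℕ → ℤ → ℝ := fun N k => if k ∈ Finset.Icc (-(N:ℤ)) N then 0 else u k with hww
  have huN : ∀ N, Summable (fun k => (uu N k)^2) := by
    intro N
    apply Summable.of_nonneg_of_le (fun k => sq_nonneg _) _ hu
    intro k
    simp only [huu]
    split
    · exact le_refl _
    · simp [sq_nonneg]
  have hwN : ∀ N, Summable (fun k => (ww N k)^2) := by
    intro N
    apply Summable.of_nonneg_of_le (fun k => sq_nonneg _) _ hu
    intro k
    simp only [hww]
    split
    · simp [sq_nonneg]
    · exact le_refl _
  have hsplitu : ∀ N, (fun k => uu N k + ww N k) = u := by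
    intro N
    funext k
    simp only [huu, hww]
    split <;> ring
  have hHsplit : ∀ N j, Hdisc u j = Hdisc (uu N) j + Hdisc (ww N) j := by
    intro N j
    rw [← Hdisc_add (huN N) (hwN N) j, hsplitu N]
  set b : ℕ → ℝ := fun N => ∑ k ∈ Finset.Icc (-(N:ℤ)) N, (u k)^2 with hb
  have hbN : ∀ N, HasSum (fun j => (Hdisc (uu N) j)^2) (b N) := by
    intro N
    have h := hasSum_Hdisc_sq_of_support (v := uu N) (s := Finset.Icc (-(N:ℤ)) N)
      (fun k hk => by simp only [huu]; rw [if_neg hk])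
    have hval : ∑ k ∈ Finset.Icc (-(N:ℤ)) N, (uu N k)^2 = b N := by
      apply Finset.sum_congr rfl
      intro k hk
      simp only [huu]
      rw [if_pos hk]
    rwa [hval] at h
  have hbB : Tendsto b atTop (𝓝 B) := tendsto_sum_Icc hu.hasSum
  have htail : ∀ N, ∑' k, (ww N k)^2 = B - b N := by
    intro N
    have hsum : B = b N + ∑' k, (ww N k)^2 := by
      have hpt : (fun k => (u k)^2) = fun k => (uu N k)^2 + (ww N k)^2 := by
        funext k
        simp only [huu, hww]
        split <;> ring
      have := (huN N).tsum_add (hwN N)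
      have huu_tsum : ∑' k, (uu N k)^2 = b N := by
        have h1 : ∑' k, (uu N k)^2 = ∑ k ∈ Finset.Icc (-(N:ℤ)) N, (uu N k)^2 :=
          tsum_eq_sum (fun k hk => by simp only [huu]; rw [if_neg hk]; ring)
        rw [h1]
        show _ = ∑ k ∈ Finset.Icc (-(N:ℤ)) N, (u k)^2
        apply Finset.sum_congr rfl
        intro k hk
        simp only [huu]
        rw [if_pos hk]
      rw [hB, hpt, this, huu_tsum]
    linarith
  have hwle : ∀ N, ∑' j, (Hdisc (ww N) j)^2 ≤ B - b N := by
    intro N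
    rw [← htail N]
    exact tsum_Hdisc_sq_le (hwN N)
  have hwnn : ∀ N, (0:ℝ) ≤ ∑' j, (Hdisc (ww N) j)^2 :=
    fun N => tsum_nonneg fun j => sq_nonneg _
  have hupper : ∀ N, Real.sqrt A ≤ Real.sqrt (b N) + Real.sqrt (B - b N) := by
    intro N
    have hAe : A = ∑' j, (Hdisc (uu N) j + Hdisc (ww N) j)^2 := by
      rw [hA]
      exact tsum_congr fun j => by rw [hHsplit N j]
    calc Real.sqrt A = Real.sqrt (∑' j, (Hdisc (uu N) j + Hdisc (ww N) j)^2) := by rw [hAe]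
      _ ≤ Real.sqrt (∑' j, (Hdisc (uu N) j)^2) + Real.sqrt (∑' j, (Hdisc (ww N) j)^2) :=
          sqrt_tsum_add_sq_le (hbN N).summable (summable_Hdisc_sq (hwN N))
      _ ≤ Real.sqrt (b N) + Real.sqrt (B - b N) := by
          apply add_le_add
          · rw [(hbN N).tsum_eq]
          · exact Real.sqrt_le_sqrt (hwle N)
  have hlower : ∀ N, Real.sqrt (b N) ≤ Real.sqrt A + Real.sqrt (B - b N) := by
    intro N
    have hsum : Summable (fun j => (Hdisc u j)^2) := summable_Hdisc_sq hu
    have hnegsq : (fun j => (-(Hdisc (ww N) j))^2) = fun j => (Hdisc (ww N) j)^2 := by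
      funext j; ring
    have hbe : b N = ∑' j, (Hdisc u j + -(Hdisc (ww N) j))^2 := by
      rw [← (hbN N).tsum_eq]
      exact tsum_congr fun j => by rw [hHsplit N j]; ring
    calc Real.sqrt (b N) = Real.sqrt (∑' j, (Hdisc u j + -(Hdisc (ww N) j))^2) := by rw [hbe]
      _ ≤ Real.sqrt (∑' j, (Hdisc u j)^2) + Real.sqrt (∑' j, (-(Hdisc (ww N) j))^2) := by
          apply sqrt_tsum_add_sq_le hsum
          rw [hnegsq]
          exact summable_Hdisc_sq (hwN N)
      _ ≤ Real.sqrt A + Real.sqrt (B - b N) := by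
          apply add_le_add
          · rw [hA]
          · rw [hnegsq]
            exact Real.sqrt_le_sqrt (hwle N)
  have hsb : Tendsto (fun N => Real.sqrt (b N)) atTop (𝓝 (Real.sqrt B)) := hbB.sqrt
  have hst : Tendsto (fun N => Real.sqrt (B - b N)) atTop (𝓝 0) := by
    have h0 : Tendsto (fun N => B - b N) atTop (𝓝 0) := by
      have := tendsto_const_nhds (x := B) (f := atTop (α := ℕ)) |>.sub hbB
      simpa using this
    have := h0.sqrt
    simpa using this
  have hAB1 : Real.sqrt A ≤ Real.sqrt B := by
    have hlim : Tendsto (fun N => Real.sqrt (b N) + Real.sqrt (B - b N)) atTop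
        (𝓝 (Real.sqrt B)) := by
      have := hsb.add hst
      simpa using this
    exact ge_of_tendsto hlim (Eventually.of_forall hupper)
  have hAB2 : Real.sqrt B ≤ Real.sqrt A := by
    have hlim : Tendsto (fun N => Real.sqrt A + Real.sqrt (B - b N)) atTop
        (𝓝 (Real.sqrt A)) := by
      have := (tendsto_const_nhds (x := Real.sqrt A) (f := atTop (α := ℕ))).add hst
      simpa using this
    exact le_of_tendsto_of_tendsto' hsb hlim hlower
  have hsqeq : Real.sqrt A = Real.sqrt B := le_antisymm hAB1 hAB2
  have hA0 : 0 ≤ A := tsum_nonneg fun j => sq_nonneg _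
  have hB0 : 0 ≤ B := tsum_nonneg fun j => sq_nonneg _
  calc A = (Real.sqrt A)^2 := (Real.sq_sqrt hA0).symm
    _ = (Real.sqrt B)^2 := by rw [hsqeq]
    _ = B := Real.sq_sqrt hB0

theorem stmt_10 (Δx : ℝ) (hΔx : 0 < Δx) (u : ℤ → ℝ)
    (hu : Summable (fun j => (u j) ^ 2)) :
    Real.sqrt (Δx * ∑' j : ℤ, (Hdisc u j) ^ 2)
      = Real.sqrt (Δx * ∑' j : ℤ, (u j) ^ 2) := by
  rw [key_parseval u hu]
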